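/- Let G = (V,E) be a unipolar graph and let G' = (V, E ∪ F) be a minimal triangulation of G. Then in any clique split H, H_1, …, H_k of G, every edge of F has one endpoint in H and the other endpoint in H_j for some j. -/

import Mathlib

/-- A clique split of a graph `G`: the vertex set is partitioned into a center clique `H`
and peripheral cliques `P 0, …, P (k-1)` with no edges between distinct peripheral cliques. -/
structure IsCliqueSplit {V : Type*} (G : SimpleGraph V) (H : Set V) {k : ℕ}
    (P : Fin k → Set V) : Prop where
  center_clique : G.IsClique H
  periph_clique : ∀ i, G.IsClique (P i)
  center_disj : ∀ i, Disjoint H (P i)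
  periph_disj : ∀ i j, i ≠ j → Disjoint (P i) (P j)
  covers : H ∪ (⋃ i, P i) = Set.univ
  no_cross : ∀ i j, i ≠ j → ∀ u ∈ P i, ∀ v ∈ P j, ¬ G.Adj u v

/-- A graph is unipolar if it admits a clique split. -/
def Unipolar {V : Type*} (G : SimpleGraph V) : Prop :=
  ∃ (H : Set V) (k : ℕ) (P : Fin k → Set V), IsCliqueSplit G H P

/-- A graph is chordal if it contains no induced cycle on four or more vertices. -/
def Chordal {V : Type*} (G : SimpleGraph V) : Prop :=
  ∀ n : ℕ, 4 ≤ n → IsEmpty (SimpleGraph.cycleGraph n ↪g G)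

/-- `Gp` is a minimal triangulation of `G`: it is a chordal supergraph of `G` on the same
vertex set, and no chordal graph strictly between `G` and `Gp` exists (the set of fill
edges is inclusion-minimal). -/
def IsMinimalTriangulation {V : Type*} (G Gp : SimpleGraph V) : Prop :=
  G ≤ Gp ∧ Chordal Gp ∧ ∀ Gpp : SimpleGraph V, G ≤ Gpp → Gpp ≤ Gp → Chordal Gpp → Gpp = Gp

/-- Auxiliary graph: `Gp` with all edges between distinct peripheral cliques removed. -/
def splitRestrict {V : Type*} (Gp : SimpleGraph V) {k : ℕ} (P : Fin k → Set V) :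
    SimpleGraph V where
  Adj u v := Gp.Adj u v ∧ ∀ a b, a ≠ b → ¬(u ∈ P a ∧ v ∈ P b)
  symm := ⟨fun _ _ h => ⟨h.1.symm, fun a b hab hc => h.2 b a (Ne.symm hab) ⟨hc.2, hc.1⟩⟩⟩
  loopless := ⟨fun v h => Gp.loopless.irrefl v h.1⟩

lemma splitRestrict_adj {V : Type*} (Gp : SimpleGraph V) {k : ℕ} (P : Fin k → Set V)
    (u v : V) : (splitRestrict Gp P).Adj u v ↔
      Gp.Adj u v ∧ ∀ a b, a ≠ b → ¬(u ∈ P a ∧ v ∈ P b) := Iff.rfl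


private lemma fin4_e1 : ∀ a : Fin 4, a + 2 + 2 = a := by decide
private lemma fin4_e2 : ∀ a : Fin 4, a + 3 + 2 = a + 1 := by decide
private lemma fin4_e3 : ∀ a : Fin 4, a + 1 + 2 = a + 3 := by decide
private lemma fin4_e4 : ∀ a : Fin 4, a + 2 + 1 = a + 3 := by decide
private lemma fin4_cases : ∀ i a : Fin 4, i = a ∨ i = a + 1 ∨ i = a + 2 ∨ i = a + 3 := by
  decide
private lemma fin4_nonadj : ∀ i j : Fin 4, i ≠ j → ¬(SimpleGraph.cycleGraph 4).Adj i j →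
    j = i + 2 := by decide
private lemma fin4_nadj2 : ∀ i : Fin 4, ¬(SimpleGraph.cycleGraph 4).Adj i (i + 2) := by
  decide

open Fin.NatCast Fin.CommRing in
lemma splitRestrict_chordal {V : Type*} (G Gp : SimpleGraph V) (hle : G ≤ Gp)
    (hch : Chordal Gp) (H : Set V) {k : ℕ} (P : Fin k → Set V)
    (hsplit : IsCliqueSplit G H P) : Chordal (splitRestrict Gp P) := by
  obtain ⟨hHc, hPc, hHd, _hPd, hcov, hnc⟩ := hsplit
  set Gpp := splitRestrict Gp P with hGpp
  have hGle : G ≤ Gpp := fun {u v} h =>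
    ⟨hle h, fun a b hab hc => hnc a b hab u hc.1 v hc.2 h⟩
  have hmem : ∀ v : V, v ∈ H ∨ ∃ a, v ∈ P a := by
    intro v
    have hv : v ∈ H ∪ ⋃ i, P i := by rw [hcov]; trivial
    rcases hv with h | h
    · exact Or.inl h
    · right; simpa using h
  have hnotP : ∀ v ∈ H, ∀ a, v ∉ P a := fun v hv a hva =>
    Set.disjoint_left.mp (hHd a) hv hva
  intro n hn
  refine ⟨fun f => ?_⟩
  haveI : NeZero n := ⟨by omega⟩
  have hinj : Function.Injective f := f.injective
  have hiff : ∀ i j : Fin n, Gpp.Adj (f i) (f j) ↔ (SimpleGraph.cycleGraph n).Adj i j :=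
    fun i j => f.map_rel_iff
  -- arithmetic helpers
  have addc : ∀ (i : Fin n) (a b c : ℕ), a + b = c →
      i + (a : Fin n) + (b : Fin n) = i + (c : Fin n) := by
    intro i a b c h; subst h; push_cast; ring
  have neqc : ∀ (i : Fin n) (c : ℕ), 1 ≤ c → c < n → i + (c : Fin n) ≠ i := by
    intro i c h1 h2 h
    have h0 : (c : Fin n) = 0 := by
      have := add_eq_left.mp h
      exact this
    have := congrArg Fin.val h0
    rw [Fin.val_cast_of_lt h2] at this
    simp at this
    omega
  have adjc : ∀ (i : Fin n) (c : ℕ), 1 ≤ c → c < n →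
      ((SimpleGraph.cycleGraph n).Adj i (i + (c : Fin n)) ↔ (c = 1 ∨ c + 1 = n)) := by
    intro i c h1 h2
    rw [SimpleGraph.cycleGraph_adj']
    have e1 : i + (c : Fin n) - i = (c : Fin n) := add_sub_cancel_left i _
    have e2 : i - (i + (c : Fin n)) = ((n - c : ℕ) : Fin n) := by
      have hz : (c : Fin n) + ((n - c : ℕ) : Fin n) = 0 := by
        rw [← Nat.cast_add, Nat.add_sub_cancel' h2.le, Fin.natCast_self]
      have hneg : ((n - c : ℕ) : Fin n) = -(c : Fin n) :=
        eq_neg_of_add_eq_zero_right hz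
      rw [hneg]; abel
    rw [e1, e2, Fin.val_cast_of_lt h2, Fin.val_cast_of_lt (by omega : n - c < n)]
    omega
  -- structural helpers
  have hH2 : ∀ (i : Fin n) (c : ℕ), 1 ≤ c → c < n → f i ∈ H → f (i + (c : Fin n)) ∈ H →
      c = 1 ∨ c + 1 = n := by
    intro i c h1 h2 hi hj
    have hne : f i ≠ f (i + (c : Fin n)) := fun he =>
      neqc i c h1 h2 (hinj he).symm
    have hadj : Gpp.Adj (f i) (f (i + (c : Fin n))) := hGle (hHc hi hj hne)
    exact (adjc i c h1 h2).mp ((hiff _ _).mp hadj)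
  have hcross : ∀ (i : Fin n) (a b : Fin k), f i ∈ P a → f (i + ((1:ℕ) : Fin n)) ∈ P b →
      a = b := by
    intro i a b hi hj
    by_contra hab
    have hadj : (SimpleGraph.cycleGraph n).Adj i (i + ((1:ℕ) : Fin n)) :=
      (adjc i 1 le_rfl (by omega)).mpr (Or.inl rfl)
    exact ((hiff _ _).mpr hadj).2 a b hab ⟨hi, hj⟩
  have hstep : ∀ (i : Fin n) (a : Fin k), f i ∈ P a → f (i + ((1:ℕ) : Fin n)) ∉ H →
      f (i + ((1:ℕ) : Fin n)) ∈ P a := by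
    intro i a hi hj
    rcases hmem (f (i + ((1:ℕ) : Fin n))) with h | ⟨b, hb⟩
    · exact absurd h hj
    · rcases hcross i a b hi hb; exact hb
  have hP2kill : ∀ (i : Fin n) (a : Fin k), f i ∈ P a → f (i + ((2:ℕ) : Fin n)) ∈ P a →
      False := by
    intro i a hi hj
    have hne : f i ≠ f (i + ((2:ℕ) : Fin n)) := fun he =>
      neqc i 2 (by omega) (by omega) (hinj he).symm
    have hadj : Gpp.Adj (f i) (f (i + ((2:ℕ) : Fin n))) := hGle (hPc a hi hj hne)
    have := (adjc i 2 (by omega) (by omega)).mp ((hiff _ _).mp hadj)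
    omega
  have h3 : ∀ i : Fin n, f i ∉ H → f (i + ((1:ℕ) : Fin n)) ∉ H →
      f (i + ((2:ℕ) : Fin n)) ∉ H → False := by
    intro i h0 h1 h2
    rcases hmem (f i) with h | ⟨a, ha⟩
    · exact h0 h
    have hb := hstep i a ha h1
    have hc : f (i + ((2:ℕ) : Fin n)) ∈ P a := by
      have h2' : f (i + ((1:ℕ) : Fin n) + ((1:ℕ) : Fin n)) ∉ H := by
        rw [addc i 1 1 2 rfl]; exact h2
      have := hstep (i + ((1:ℕ) : Fin n)) a hb h2'
      rwa [addc i 1 1 2 rfl] at this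
    exact hP2kill i a ha hc
  -- there is a vertex mapped into H
  have hex : ∃ i : Fin n, f i ∈ H := by
    by_contra hno
    push_neg at hno
    exact h3 0 (hno 0) (hno _) (hno _)
  obtain ⟨i0, hi0⟩ := hex
  have hk2 : f (i0 + ((2:ℕ) : Fin n)) ∈ H → False := by
    intro h
    have := hH2 i0 2 (by omega) (by omega) hi0 h
    omega
  -- derive n = 4 and the configuration
  have hconf : n = 4 ∧ ∃ a : Fin n, f a ∈ H ∧ f (a + ((1:ℕ) : Fin n)) ∈ H ∧
      f (a + ((2:ℕ) : Fin n)) ∉ H ∧ f (a + ((3:ℕ) : Fin n)) ∉ H := by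
    by_cases hA : f (i0 + ((1:ℕ) : Fin n)) ∈ H
    · -- f(i0+2) ∉ H, f(i0+3) ∉ H, then f(i0+4) ∈ H
      have h2 : f (i0 + ((2:ℕ) : Fin n)) ∉ H := fun h => hk2 h
      have h3' : f (i0 + ((3:ℕ) : Fin n)) ∉ H := by
        intro h
        have h' : f (i0 + ((1:ℕ) : Fin n) + ((2:ℕ) : Fin n)) ∈ H := by
          rw [addc i0 1 2 3 rfl]; exact h
        have := hH2 (i0 + ((1:ℕ) : Fin n)) 2 (by omega) (by omega) hA h'
        omega
      have h4H : f (i0 + ((4:ℕ) : Fin n)) ∈ H := by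
        by_contra h4
        refine h3 (i0 + ((2:ℕ) : Fin n)) h2 ?_ ?_
        · rw [addc i0 2 1 3 rfl]; exact h3'
        · rw [addc i0 2 2 4 rfl]; exact h4
      by_cases hn4 : n = 4
      · exact ⟨hn4, i0, hi0, hA, h2, h3'⟩
      · exfalso
        have h5 : 5 ≤ n ∨ n = 4 := by omega
        have hn5 : n = 5 := by
          have := hH2 i0 4 (by omega) (by omega) hi0 h4H
          omega
        have h' : f (i0 + ((1:ℕ) : Fin n) + ((3:ℕ) : Fin n)) ∈ H := by
          rw [addc i0 1 3 4 rfl]; exact h4H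
        have := hH2 (i0 + ((1:ℕ) : Fin n)) 3 (by omega) (by omega) hA h'
        omega
    · by_cases hB : f (i0 + ((3:ℕ) : Fin n)) ∈ H
      · have hn4 : n = 4 := by
          have := hH2 i0 3 (by omega) (by omega) hi0 hB
          omega
        refine ⟨hn4, i0 + ((3:ℕ) : Fin n), hB, ?_, ?_, ?_⟩
        · rw [addc i0 3 1 4 rfl]
          have h40 : ((4:ℕ) : Fin n) = 0 := by
            rw [← hn4]; exact Fin.natCast_self n
          rw [h40, add_zero]; exact hi0
        · rw [addc i0 3 2 5 rfl]
          have h40 : ((4:ℕ) : Fin n) = 0 := by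
            rw [← hn4]; exact Fin.natCast_self n
          have h51 : ((5:ℕ) : Fin n) = ((1:ℕ) : Fin n) := by
            rw [show (5:ℕ) = 1 + 4 from rfl, Nat.cast_add, h40, add_zero]
          rw [h51]; exact hA
        · rw [addc i0 3 3 6 rfl]
          have h40 : ((4:ℕ) : Fin n) = 0 := by
            rw [← hn4]; exact Fin.natCast_self n
          have h62 : ((6:ℕ) : Fin n) = ((2:ℕ) : Fin n) := by
            rw [show (6:ℕ) = 2 + 4 from rfl, Nat.cast_add, h40, add_zero]
          rw [h62]; exact fun h => hk2 h
      · exfalso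
        refine h3 (i0 + ((1:ℕ) : Fin n)) hA ?_ ?_
        · rw [addc i0 1 1 2 rfl]
          exact fun h => hk2 h
        · rw [addc i0 1 2 3 rfl]; exact hB
  obtain ⟨hn4, a, ha0, ha1, ha2, ha3⟩ := hconf
  subst hn4
  -- now work in Fin 4
  have c1 : ((1:ℕ) : Fin 4) = 1 := rfl
  have c2 : ((2:ℕ) : Fin 4) = 2 := rfl
  have c3 : ((3:ℕ) : Fin 4) = 3 := rfl
  rw [c1] at ha1
  rw [c2] at ha2
  rw [c3] at ha3
  obtain ⟨b, hb2⟩ : ∃ b, f (a + 2) ∈ P b := by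
    rcases hmem (f (a + 2)) with h | h
    · exact absurd h ha2
    · exact h
  have hb3 : f (a + 3) ∈ P b := by
    have e : a + 2 + ((1:ℕ) : Fin 4) = a + 3 := by rw [c1]; exact fin4_e4 a
    have := hstep (a + 2) b hb2 (by rw [e]; exact ha3)
    rwa [e] at this
  have hnadj2 : ∀ i : Fin 4, ¬ (SimpleGraph.cycleGraph 4).Adj i (i + 2) := fin4_nadj2
  have hfromH : ∀ u v : V, u ∈ H → Gp.Adj u v → Gpp.Adj u v := by
    intro u v hu hadj
    exact ⟨hadj, fun x y hxy hc => hnotP u hu x hc.1⟩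
  by_cases hc1 : Gp.Adj (f a) (f (a + 2))
  · have : (SimpleGraph.cycleGraph 4).Adj a (a + 2) :=
      (hiff _ _).mp (hfromH _ _ ha0 hc1)
    exact hnadj2 a this
  by_cases hc2 : Gp.Adj (f (a + 1)) (f (a + 3))
  · have e : a + 1 + 2 = a + 3 := fin4_e3 a
    have : (SimpleGraph.cycleGraph 4).Adj (a + 1) (a + 1 + 2) :=
      (hiff _ _).mp (hfromH _ _ ha1 (by rw [e]; exact hc2))
    exact hnadj2 (a + 1) this
  -- build an induced 4-cycle in Gp, contradicting chordality of Gp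
  refine (hch 4 le_rfl).false ⟨⟨fun i => f i, hinj⟩, ?_⟩
  intro i j
  constructor
  · intro hadj
    by_contra hnadj
    have hne : i ≠ j := by
      intro he; subst he; exact Gp.loopless.irrefl _ hadj
    have hj2 : j = i + 2 := fin4_nonadj i j hne hnadj
    subst hj2
    have hi4 : i = a ∨ i = a + 1 ∨ i = a + 2 ∨ i = a + 3 := fin4_cases i a
    have e1 : a + 2 + 2 = a := fin4_e1 a
    have e2 : a + 3 + 2 = a + 1 := fin4_e2 a
    have e3 : a + 1 + 2 = a + 3 := fin4_e3 a
    rcases hi4 with rfl | rfl | rfl | rfl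
    · exact hc1 hadj
    · rw [e3] at hadj; exact hc2 hadj
    · rw [e1] at hadj; exact hc1 hadj.symm
    · rw [e2] at hadj; exact hc2 hadj.symm
  · intro hadj
    exact ((hiff i j).mpr hadj).1

theorem minimalTriangulation_fill_edges {V : Type*} (G Gp : SimpleGraph V)
    (hmt : IsMinimalTriangulation G Gp)
    (H : Set V) {k : ℕ} (P : Fin k → Set V) (hsplit : IsCliqueSplit G H P) :
    ∀ u v : V, Gp.Adj u v → ¬ G.Adj u v →
      (u ∈ H ∧ ∃ j : Fin k, v ∈ P j) ∨ (v ∈ H ∧ ∃ j : Fin k, u ∈ P j) := by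
  obtain ⟨hle, hch, hmin⟩ := hmt
  have hGle : G ≤ splitRestrict Gp P := fun {u v} h =>
    ⟨hle h, fun a b hab hc => hsplit.no_cross a b hab u hc.1 v hc.2 h⟩
  have hGpple : splitRestrict Gp P ≤ Gp := fun {u v} h => h.1
  have heq : splitRestrict Gp P = Gp :=
    hmin _ hGle hGpple (splitRestrict_chordal G Gp hle hch H P hsplit)
  intro u v huv hnG
  have hGppuv : (splitRestrict Gp P).Adj u v := by rw [heq]; exact huv
  have hmem : ∀ w : V, w ∈ H ∨ ∃ a, w ∈ P a := by
    intro w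
    have hw : w ∈ H ∪ ⋃ i, P i := by rw [hsplit.covers]; trivial
    rcases hw with h | h
    · exact Or.inl h
    · right; simpa using h
  rcases hmem u with hu | ⟨a, hu⟩
  · rcases hmem v with hv | ⟨b, hv⟩
    · exact absurd (hsplit.center_clique hu hv huv.ne) hnG
    · exact Or.inl ⟨hu, b, hv⟩
  · rcases hmem v with hv | ⟨b, hv⟩
    · exact Or.inr ⟨hv, a, hu⟩
    · by_cases hab : a = b
      · subst hab
        exact absurd (hsplit.periph_clique a hu hv huv.ne) hnG
      · exact absurd ⟨hu, hv⟩ (hGppuv.2 a b hab)
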